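/- For every integer s ≥ 0, one has Z_s(1) = 1 if s = 0 and Z_s(1) = 0 if s ≥ 1. -/

import Mathlib

open scoped BigOperators

noncomputable section

attribute [local instance 10] Classical.propDecidable

/-- The `q`-integer `[n] = (1 - q^n)/(1 - q)`. -/
def qint (q : ℝ) (n : ℕ) : ℝ := (1 - q ^ n) / (1 - q)

/-- `I(r,n)`: multi-indices of positive integers of depth `r` and weight `n`. -/
def Ifin (r n : ℕ) : Finset (Fin r → ℕ) :=
  (Fintype.piFinset fun _ : Fin r => Finset.Icc 1 n).filter fun c => (∑ i, c i) = n

/-- `I₀(r,n)`: admissible multi-indices (first entry at least 2). -/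
def I0fin (r n : ℕ) : Finset (Fin r → ℕ) :=
  (Ifin r n).filter fun c => ∀ h : 0 < r, 2 ≤ c ⟨0, h⟩

/-- The `q`-analogue of the multiple zeta value,
`ζ_q(α) = Σ_{m_1 > ... > m_r > 0} Π_j q^{(α_j - 1) m_j}/[m_j]^{α_j}`. -/
def zetaQ (q : ℝ) {r : ℕ} (α : Fin r → ℕ) : ℝ :=
  ∑' m : {m : Fin r → ℕ // (∀ i j : Fin r, i < j → m j < m i) ∧ ∀ i, 0 < m i},
    ∏ j, q ^ ((α j - 1) * m.1 j) / qint q (m.1 j) ^ α j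

/-- `K_{b,n}(M) = Σ_{α ∈ I₀(b,n)} Σ_{m_1 > ... > m_{b-1} > m_b = M} Π_j q^{(α_j-1)m_j}/[m_j]^{α_j}`. -/
def Kfun (q : ℝ) (b n M : ℕ) : ℝ :=
  ∑ α ∈ I0fin b n,
    ∑' m : {m : Fin b → ℕ //
        (∀ i j : Fin b, i < j → m j < m i) ∧
          ∀ h : 0 < b, m ⟨b - 1, Nat.sub_lt h Nat.one_pos⟩ = M},
      ∏ j, q ^ ((α j - 1) * m.1 j) / qint q (m.1 j) ^ α j

/-- `f_ℓ(N,M) = Σ_{N = k_1 > k_2 > ... > k_ℓ > M} (q^{k_1-M}/[k_1-M]) Π_{j=2}^{ℓ} 1/[k_j-M]`. -/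
def fS (q : ℝ) (l N M : ℕ) : ℝ :=
  ∑ k ∈ (Fintype.piFinset fun _ : Fin l => Finset.Ioc M N).filter
      (fun k => (∀ i j : Fin l, i < j → k j < k i) ∧ ∀ h : 0 < l, k ⟨0, h⟩ = N),
    ∏ j : Fin l, (if (j : ℕ) = 0 then q ^ (k j - M) else 1) / qint q (k j - M)

/-- `g_{ℓ,β}(M) = Σ_{M = m_1 ≥ m_2 ≥ ... ≥ m_ℓ ≥ 1} (q^{(β-1)m_1}/[m_1]^β) Π_{j=2}^{ℓ} q^{m_j}/[m_j]`. -/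
def gS (q : ℝ) (l β M : ℕ) : ℝ :=
  ∑ m ∈ (Fintype.piFinset fun _ : Fin l => Finset.Icc 1 M).filter
      (fun m => (∀ i j : Fin l, i ≤ j → m j ≤ m i) ∧ ∀ h : 0 < l, m ⟨0, h⟩ = M),
    ∏ j : Fin l, if (j : ℕ) = 0 then q ^ ((β - 1) * m j) / qint q (m j) ^ β
      else q ^ m j / qint q (m j)

/-- `h_{r,ℓ}(N_1,...,N_r,M) = Σ_{c ∈ I(r,ℓ)} (Π_{j=1}^{r-1} f_{c_j}(N_j,N_{j+1})) f_{c_r}(N_r,M)`. -/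
def hS (q : ℝ) (r l : ℕ) (N : Fin r → ℕ) (M : ℕ) : ℝ :=
  ∑ c ∈ Ifin r l,
    ∏ j : Fin r, fS q (c j) (N j) (if h : (j : ℕ) + 1 < r then N ⟨(j : ℕ) + 1, h⟩ else M)

/-- `p(n_1,...,n_s;m) = (q^{n_1-m}/[n_1-m]) Π_{j=2}^{s} 1/[n_j-m]`, with `p(∅;m) = 1`. -/
def pS (q : ℝ) {s : ℕ} (n : Fin s → ℕ) (m : ℕ) : ℝ :=
  ∏ j : Fin s, (if (j : ℕ) = 0 then q ^ (n j - m) else 1) / qint q (n j - m)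

/-! ### The algebras 𝔡, 𝔡_ξ and 𝔡₁ -/

/-- The alphabet `S = {z_k}_{k ≥ 1} ∪ {ξ_k}_{k ≥ 1}`: `Sum.inl k = z_k`, `Sum.inr k = ξ_k`. -/
abbrev Letter : Type := ℕ+ ⊕ ℕ+

/-- The noncommutative polynomial algebra 𝔡 over ℤ freely generated by `S`. -/
abbrev Dfree : Type := MonoidAlgebra ℤ (FreeMonoid Letter)

/-- The subalgebra 𝔡_ξ generated by the `ξ_k`, realized as a free algebra on `{ξ_k}_{k≥1}`. -/
abbrev DXi : Type := MonoidAlgebra ℤ (FreeMonoid ℕ+)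

/-- The subalgebra 𝔡₁ generated by `z_1` and `ξ_1`, realized as a free algebra on two letters
(`false = z_1`, `true = ξ_1`). -/
abbrev DOne : Type := MonoidAlgebra ℤ (FreeMonoid Bool)

/-- The generator `z_k` of 𝔡. -/
def zL (k : ℕ+) : Dfree := MonoidAlgebra.single (FreeMonoid.of (Sum.inl k)) 1

/-- The generator `ξ_k` of 𝔡. -/
def xiL (k : ℕ+) : Dfree := MonoidAlgebra.single (FreeMonoid.of (Sum.inr k)) 1

/-- The generator `ξ_k` of 𝔡_ξ. -/
def xiX (k : ℕ+) : DXi := MonoidAlgebra.single (FreeMonoid.of k) 1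

/-- The generator `z_1` of 𝔡₁. -/
def zO : DOne := MonoidAlgebra.single (FreeMonoid.of false) 1

/-- The generator `ξ_1` of 𝔡₁. -/
def xiO : DOne := MonoidAlgebra.single (FreeMonoid.of true) 1

/-- `z_k` for a natural number index `k ≥ 1` (junk value `0` for `k = 0`). -/
def zOf (k : ℕ) : Dfree := if h : 0 < k then zL ⟨k, h⟩ else 0

/-- `ξ_k ∈ 𝔡_ξ` for a natural number index `k ≥ 1` (junk value `0` for `k = 0`). -/
def xiOf (k : ℕ) : DXi := if h : 0 < k then xiX ⟨k, h⟩ else 0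

/-- The canonical embedding `𝔡_ξ ↪ 𝔡`. -/
def toD (v : DXi) : Dfree := MonoidAlgebra.ofCoeff (Finsupp.mapDomain (FreeMonoid.map Sum.inr) v.coeff)

/-- The canonical embedding `𝔡₁ ↪ 𝔡` (`false ↦ z_1`, `true ↦ ξ_1`). -/
def toD1 (w : DOne) : Dfree :=
  MonoidAlgebra.ofCoeff (Finsupp.mapDomain (FreeMonoid.map fun b => if b then Sum.inr 1 else Sum.inl 1) w.coeff)

/-- `J_{z_k}(m) = q^{(k-1)m}/[m]^k` and `J_{ξ_k}(m) = q^{km}/[m]^k`. -/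
def Jlet (q : ℝ) : Letter → ℕ → ℝ
  | Sum.inl k, m => q ^ (((k : ℕ) - 1) * m) / qint q m ^ (k : ℕ)
  | Sum.inr k, m => q ^ ((k : ℕ) * m) / qint q m ^ (k : ℕ)

/-- `A_w(M) = Σ_{M > m_1 > ... > m_r > 0} J_{u_1}(m_1) ⋯ J_{u_r}(m_r)` for a word `w = u_1 ⋯ u_r`. -/
def AW (q : ℝ) (w : List Letter) (M : ℕ) : ℝ :=
  ∑ m ∈ (Fintype.piFinset fun _ : Fin w.length => Finset.Ioo 0 M).filter
      (fun m => ∀ i j, i < j → m j < m i),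
    ∏ j, Jlet q (w.get j) (m j)

/-- `A*_w(M) = Σ_{M > m_1 ≥ ... ≥ m_r ≥ 1} J_{u_1}(m_1) ⋯ J_{u_r}(m_r)` for a word `w = u_1 ⋯ u_r`. -/
def AstarW (q : ℝ) (w : List Letter) (M : ℕ) : ℝ :=
  ∑ m ∈ (Fintype.piFinset fun _ : Fin w.length => Finset.Ioo 0 M).filter
      (fun m => ∀ i j, i ≤ j → m j ≤ m i),
    ∏ j, Jlet q (w.get j) (m j)

/-- The ℤ-linear extension `A(M) : 𝔡 → ℝ`. -/
def Amap (q : ℝ) (x : Dfree) (M : ℕ) : ℝ :=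
  Finsupp.sum x.coeff fun w a => (a : ℝ) * AW q (FreeMonoid.toList w) M

/-- The ℤ-linear extension `A*(M) : 𝔡 → ℝ`. -/
def Astarmap (q : ℝ) (x : Dfree) (M : ℕ) : ℝ :=
  Finsupp.sum x.coeff fun w a => (a : ℝ) * AstarW q (FreeMonoid.toList w) M

/-- The map `ρ` on words:  `ρ(1,w) = w`, `ρ(v,1) = v`,
`ρ(ξ_k v, z_ℓ w) = ξ_k ρ(v, z_ℓ w) + z_ℓ ρ(ξ_k v, w) + z_{k+ℓ} ρ(v,w)`, and
`ρ(ξ_k v, ξ_ℓ w) = ξ_k ρ(v, ξ_ℓ w) + ξ_ℓ ρ(ξ_k v, w) + ξ_{k+ℓ} ρ(v,w)`. -/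
def rhoW : List ℕ+ → List Letter → Dfree
  | [], w => MonoidAlgebra.single (FreeMonoid.ofList w) 1
  | k :: v, [] => MonoidAlgebra.single (FreeMonoid.ofList ((k :: v).map Sum.inr)) 1
  | k :: v, Sum.inl l :: w =>
      xiL k * rhoW v (Sum.inl l :: w) + zL l * rhoW (k :: v) w + zL (k + l) * rhoW v w
  | k :: v, Sum.inr l :: w =>
      xiL k * rhoW v (Sum.inr l :: w) + xiL l * rhoW (k :: v) w + xiL (k + l) * rhoW v w
  termination_by v w => v.length + w.length

/-- The ℤ-bilinear map `ρ : 𝔡_ξ × 𝔡 → 𝔡`. -/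
def rho (v : DXi) (x : Dfree) : Dfree :=
  Finsupp.sum v.coeff fun vw a =>
    Finsupp.sum x.coeff fun xw b => (a * b) • rhoW (FreeMonoid.toList vw) (FreeMonoid.toList xw)

/-- `ξ_k ∘ ·` on words: `ξ_k ∘ 1 = 0` and `ξ_k ∘ (ξ_ℓ v) = ξ_{k+ℓ} v`. -/
def circW (k : ℕ+) : List ℕ+ → DXi
  | [] => 0
  | l :: v => MonoidAlgebra.single (FreeMonoid.ofList ((k + l) :: v)) 1

/-- The ℤ-linear map `ξ_k ∘ · : 𝔡_ξ → 𝔡_ξ`. -/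
def circ (k : ℕ+) (x : DXi) : DXi :=
  Finsupp.sum x.coeff fun w a => a • circW k (FreeMonoid.toList w)

/-- The map `d` on words: `d(1) = 1` and `d(ξ_k v) = ξ_k d(v) + ξ_k ∘ d(v)`. -/
def dW : List ℕ+ → DXi
  | [] => 1
  | k :: v => xiX k * dW v + circ k (dW v)

/-- The ℤ-linear map `d : 𝔡_ξ → 𝔡_ξ`. -/
def dmap (v : DXi) : DXi := Finsupp.sum v.coeff fun w a => a • dW (FreeMonoid.toList w)

/-- The maps `φ_s` on words of 𝔡₁: `φ_0 = id`, `φ_s(1) = ξ_1 z_1^{s-1}` for `s ≥ 1`,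
`φ_s(z_1 w) = z_1 φ_s(w) + ξ_1 Σ_{i=1}^{s} z_1^i φ_{s-i}(w)`, and
`φ_s(ξ_1 w) = ξ_1 Σ_{i=0}^{s} z_1^i φ_{s-i}(w)`. -/
def phiW : ℕ → List Bool → DOne
  | s, [] =>
      if s = 0 then 1
      else MonoidAlgebra.single (FreeMonoid.ofList (true :: List.replicate (s - 1) false)) 1
  | s, false :: w =>
      zO * phiW s w +
        ∑ i ∈ Finset.Icc 1 s, xiO * zO ^ i * phiW (s - i) w
  | s, true :: w =>
      ∑ i ∈ Finset.range (s + 1), xiO * zO ^ i * phiW (s - i) w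
  termination_by _ w => w.length

/-- The ℤ-linear maps `φ_s : 𝔡₁ → 𝔡₁`. -/
def phi (s : ℕ) (x : DOne) : DOne := Finsupp.sum x.coeff fun w a => a • phiW s (FreeMonoid.toList w)

/-- `Φ_0 = id` and `Φ_ℓ = Σ_{r=1}^{ℓ} (-1)^r Σ_{c ∈ I(r,ℓ)} φ_{c_1} ⋯ φ_{c_r}` for `ℓ ≥ 1`. -/
def PhiM : ℕ → DOne → DOne
  | 0 => id
  | l + 1 => fun x =>
      ∑ r ∈ Finset.Icc 1 (l + 1),
        (-1 : ℤ) ^ r •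
          ∑ c ∈ Ifin r (l + 1), ((List.ofFn fun j : Fin r => phi (c j)).foldr (· ∘ ·) id) x

/-- `Z_s(w) = Σ_{ℓ=0}^{s} ρ(d(ξ_1^{s-ℓ}), Φ_ℓ(w))`. -/
def Zmap (s : ℕ) (w : DOne) : Dfree :=
  ∑ l ∈ Finset.range (s + 1), rho (dmap (xiX 1 ^ (s - l))) (toD1 (PhiM l w))
/-! ### Auxiliary lemmas -/

section Aux

-- linearity helpers
lemma lsum_single {X M : Type*} [DecidableEq X] [AddCommGroup M] (f : FreeMonoid X → M)
    (w : FreeMonoid X) (a : ℤ) :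
    ((MonoidAlgebra.single w a : MonoidAlgebra ℤ (FreeMonoid X)).coeff.sum fun w a => a • f w)
      = a • f w :=
  Finsupp.sum_single_index (zero_smul _ _)

lemma lsum_add {X M : Type*} [AddCommGroup M] (f : FreeMonoid X → M)
    (x y : MonoidAlgebra ℤ (FreeMonoid X)) :
    ((x + y).coeff.sum fun w a => a • f w)
      = (x.coeff.sum fun w a => a • f w) + (y.coeff.sum fun w a => a • f w) :=
  Finsupp.sum_add_index' (fun w => zero_smul _ _) (fun w a b => add_smul _ _ _)

lemma single_one_pow {X : Type*} (u : List X) (m : ℕ) :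
    (MonoidAlgebra.single (FreeMonoid.ofList u) 1 : MonoidAlgebra ℤ (FreeMonoid X)) ^ m
      = MonoidAlgebra.single (FreeMonoid.ofList (List.flatten (List.replicate m u))) 1 := by
  induction m with
  | zero => rfl
  | succ m ih =>
      rw [pow_succ', ih, MonoidAlgebra.single_mul_single, one_mul]
      congr 1

-- dmap
lemma dmap_single (w : FreeMonoid ℕ+) (a : ℤ) :
    dmap (MonoidAlgebra.single w a) = a • dW (FreeMonoid.toList w) :=
  lsum_single _ w a

lemma dmap_one : dmap 1 = 1 := by
  have := dmap_single 1 1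
  simpa [MonoidAlgebra.one_def, dW] using this

-- circ
lemma circ_single (k : ℕ+) (w : FreeMonoid ℕ+) (a : ℤ) :
    circ k (MonoidAlgebra.single w a) = a • circW k (FreeMonoid.toList w) :=
  lsum_single _ w a

lemma circ_add (k : ℕ+) (x y : DXi) : circ k (x + y) = circ k x + circ k y :=
  lsum_add _ x y

lemma circ_mul_xi (k l : ℕ+) (u : DXi) : circ k (xiX l * u) = xiX (k + l) * u := by
  induction u using MonoidAlgebra.induction_linear with
  | zero => simp [circ, Finsupp.sum_zero_index]
  | add x y hx hy => rw [mul_add, circ_add, hx, hy, mul_add]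
  | single w a =>
      rw [xiX, MonoidAlgebra.single_mul_single, one_mul, circ_single]
      have : FreeMonoid.toList (FreeMonoid.of l * w) = l :: FreeMonoid.toList w := by simp
      rw [this, circW, xiX, MonoidAlgebra.single_mul_single, one_mul]
      rw [MonoidAlgebra.smul_single, smul_eq_mul, mul_one]
      congr 1

end Aux
section Rho

lemma rho_single_single (v : FreeMonoid ℕ+) (a : ℤ) (w : FreeMonoid Letter) (b : ℤ) :
    rho (MonoidAlgebra.single v a) (MonoidAlgebra.single w b)
      = (a * b) • rhoW (FreeMonoid.toList v) (FreeMonoid.toList w) := by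
  unfold rho
  rw [MonoidAlgebra.coeff_single, MonoidAlgebra.coeff_single]
  rw [Finsupp.sum_single_index, Finsupp.sum_single_index]
  · simp
  · simp [Finsupp.sum_single_index]

lemma rho_add_left (v₁ v₂ : DXi) (x : Dfree) :
    rho (v₁ + v₂) x = rho v₁ x + rho v₂ x := by
  unfold rho
  rw [MonoidAlgebra.coeff_add]
  apply Finsupp.sum_add_index' <;> intros <;> simp [add_mul, add_smul, Finsupp.sum_add]

lemma rho_add_right (v : DXi) (x y : Dfree) :
    rho v (x + y) = rho v x + rho v y := by
  unfold rho
  simp only [MonoidAlgebra.coeff_add]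
  rw [← Finsupp.sum_add]
  apply Finsupp.sum_congr
  intro w _
  apply Finsupp.sum_add_index' <;> intros <;> simp [mul_add, add_smul]

lemma rho_zero_left (x : Dfree) : rho 0 x = 0 := by
  simp [rho, Finsupp.sum_zero_index]

lemma rho_zero_right (v : DXi) : rho v 0 = 0 := by
  simp [rho, Finsupp.sum_zero_index]

/-- `rho v` as an additive hom in the second variable. -/
def rhoR (v : DXi) : Dfree →+ Dfree :=
  { toFun := rho v, map_zero' := rho_zero_right v, map_add' := rho_add_right v }

/-- `rho · x` as an additive hom in the first variable. -/
def rhoL (x : Dfree) : DXi →+ Dfree :=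
  { toFun := fun v => rho v x, map_zero' := rho_zero_left x, map_add' := fun a b => rho_add_left a b x }

lemma rho_one_left (x : Dfree) : rho 1 x = x := by
  unfold rho
  rw [MonoidAlgebra.one_def, MonoidAlgebra.coeff_single, Finsupp.sum_single_index]
  · have : ∀ w : FreeMonoid Letter, rhoW [] (FreeMonoid.toList w)
        = MonoidAlgebra.single w 1 := fun w => by rw [rhoW]; congr 1
    calc (x.coeff.sum fun xw b => (1 * b) • rhoW (FreeMonoid.toList (1 : FreeMonoid ℕ+)) (FreeMonoid.toList xw))
        = x.coeff.sum fun xw b => MonoidAlgebra.single xw b := by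
          apply Finsupp.sum_congr
          intro w _
          rw [show FreeMonoid.toList (1 : FreeMonoid ℕ+) = [] from rfl, this w, one_mul]
          simp
      _ = x := MonoidAlgebra.sum_coeff_single x
  · simp [Finsupp.sum_zero_index]

lemma rhoW_nil_right (v : List ℕ+) :
    rhoW v [] = MonoidAlgebra.single (FreeMonoid.ofList (v.map Sum.inr)) 1 := by
  cases v <;> rw [rhoW] <;> simp

lemma rho_one_right (v : DXi) : rho v 1 = toD v := by
  unfold rho toD
  rw [show (MonoidAlgebra.ofCoeff (Finsupp.mapDomain (FreeMonoid.map Sum.inr) v.coeff) : Dfree)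
      = v.coeff.sum fun w a => MonoidAlgebra.single ((FreeMonoid.map Sum.inr) w) a from by
        rw [Finsupp.mapDomain, MonoidAlgebra.ofCoeff_finsuppSum]; rfl]
  apply Finsupp.sum_congr
  intro w _
  rw [MonoidAlgebra.one_def, MonoidAlgebra.coeff_single, Finsupp.sum_single_index]
  · rw [show FreeMonoid.toList (1 : FreeMonoid Letter) = [] from rfl, rhoW_nil_right, mul_one]
    rw [MonoidAlgebra.smul_single, smul_eq_mul, mul_one]
    congr 1
  · simp

end Rho
section Key

lemma rho_xi_xi_ss (k l : ℕ+) (vw : FreeMonoid ℕ+) (a : ℤ) (xw : FreeMonoid Letter) (b : ℤ) :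
    rho (xiX k * MonoidAlgebra.single vw a) (xiL l * MonoidAlgebra.single xw b)
      = xiL k * rho (MonoidAlgebra.single vw a) (xiL l * MonoidAlgebra.single xw b)
        + xiL l * rho (xiX k * MonoidAlgebra.single vw a) (MonoidAlgebra.single xw b)
        + xiL (k + l) * rho (MonoidAlgebra.single vw a) (MonoidAlgebra.single xw b) := by
  have e1 : xiX k * MonoidAlgebra.single vw a
      = MonoidAlgebra.single (FreeMonoid.of k * vw) a := by
    rw [xiX, MonoidAlgebra.single_mul_single, one_mul]
  have e2 : xiL l * MonoidAlgebra.single xw b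
      = MonoidAlgebra.single (FreeMonoid.of (Sum.inr l : Letter) * xw) b := by
    rw [xiL, MonoidAlgebra.single_mul_single, one_mul]
  rw [e1, e2, rho_single_single, rho_single_single, rho_single_single, rho_single_single]
  have t1 : FreeMonoid.toList (FreeMonoid.of k * vw) = k :: FreeMonoid.toList vw := by simp
  have t2 : FreeMonoid.toList (FreeMonoid.of (Sum.inr l : Letter) * xw)
      = Sum.inr l :: FreeMonoid.toList xw := by simp
  rw [t1, t2, rhoW]
  simp only [smul_add, mul_smul_comm]

lemma rho_xi_xi_s (k l : ℕ+) (vw : FreeMonoid ℕ+) (a : ℤ) (x : Dfree) :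
    rho (xiX k * MonoidAlgebra.single vw a) (xiL l * x)
      = xiL k * rho (MonoidAlgebra.single vw a) (xiL l * x)
        + xiL l * rho (xiX k * MonoidAlgebra.single vw a) x
        + xiL (k + l) * rho (MonoidAlgebra.single vw a) x := by
  have key : ((rhoR (xiX k * MonoidAlgebra.single vw a)).comp (AddMonoidHom.mulLeft (xiL l)))
      = (AddMonoidHom.mulLeft (xiL k)).comp
          ((rhoR (MonoidAlgebra.single vw a)).comp (AddMonoidHom.mulLeft (xiL l)))
        + (AddMonoidHom.mulLeft (xiL l)).comp (rhoR (xiX k * MonoidAlgebra.single vw a))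
        + (AddMonoidHom.mulLeft (xiL (k + l))).comp (rhoR (MonoidAlgebra.single vw a)) := by
    apply MonoidAlgebra.addMonoidHom_ext
    intro xw b
    simp only [AddMonoidHom.coe_comp, Function.comp_apply, AddMonoidHom.add_apply,
      AddMonoidHom.coe_mulLeft]
    exact rho_xi_xi_ss k l vw a xw b
  have := DFunLike.congr_fun key x
  simpa only [AddMonoidHom.coe_comp, Function.comp_apply, AddMonoidHom.add_apply,
    AddMonoidHom.coe_mulLeft, rhoR, rhoL, AddMonoidHom.coe_mk, ZeroHom.coe_mk] using this

lemma rho_xi_xi (k l : ℕ+) (v : DXi) (x : Dfree) :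
    rho (xiX k * v) (xiL l * x)
      = xiL k * rho v (xiL l * x) + xiL l * rho (xiX k * v) x + xiL (k + l) * rho v x := by
  have key : ((rhoL (xiL l * x)).comp (AddMonoidHom.mulLeft (xiX k)))
      = (AddMonoidHom.mulLeft (xiL k)).comp (rhoL (xiL l * x))
        + (AddMonoidHom.mulLeft (xiL l)).comp ((rhoL x).comp (AddMonoidHom.mulLeft (xiX k)))
        + (AddMonoidHom.mulLeft (xiL (k + l))).comp (rhoL x) := by
    apply MonoidAlgebra.addMonoidHom_ext
    intro vw a
    simp only [AddMonoidHom.coe_comp, Function.comp_apply, AddMonoidHom.add_apply,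
      AddMonoidHom.coe_mulLeft]
    exact rho_xi_xi_s k l vw a x
  have := DFunLike.congr_fun key v
  simpa only [AddMonoidHom.coe_comp, Function.comp_apply, AddMonoidHom.add_apply,
    AddMonoidHom.coe_mulLeft, rhoR, rhoL, AddMonoidHom.coe_mk, ZeroHom.coe_mk] using this

lemma toD_mul (v w : DXi) : toD (v * w) = toD v * toD w :=
  MonoidAlgebra.mapDomain_mul (FreeMonoid.map (Sum.inr : ℕ+ → Letter)) v w

lemma toD_xiX (k : ℕ+) : toD (xiX k) = xiL k := by
  unfold toD xiX xiL
  rw [MonoidAlgebra.coeff_single, Finsupp.mapDomain_single]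
  rfl

lemma toD_one : toD 1 = 1 := by
  simp [toD, MonoidAlgebra.one_def, Finsupp.mapDomain_single]

/-- `D m = d(ξ₁^m)`. -/
def Dm (m : ℕ) : DXi := dmap (xiX 1 ^ m)

lemma xiX_pow (m : ℕ) :
    xiX 1 ^ m = MonoidAlgebra.single (FreeMonoid.ofList (List.replicate m 1)) 1 := by
  induction m with
  | zero => rw [pow_zero, MonoidAlgebra.one_def]; rfl
  | succ m ih =>
      rw [pow_succ', ih, xiX, MonoidAlgebra.single_mul_single, one_mul]
      congr 1

lemma Dm_eq (m : ℕ) : Dm m = dW (List.replicate m 1) := by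
  rw [Dm, xiX_pow, dmap_single, one_smul]
  rfl

lemma Dm_zero : Dm 0 = 1 := by rw [Dm_eq]; rfl

lemma Dm_step (m : ℕ) : Dm (m + 1) = xiX 1 * Dm m + circ 1 (Dm m) := by
  rw [Dm_eq, Dm_eq, List.replicate_succ, dW]

/-- `circ k` as an additive hom. -/
def circHom (k : ℕ+) : DXi →+ DXi :=
  { toFun := circ k, map_zero' := by simp [circ, Finsupp.sum_zero_index],
    map_add' := circ_add k }

lemma circ_one : circ 1 (1 : DXi) = 0 := by
  rw [MonoidAlgebra.one_def, circ_single]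
  rw [show FreeMonoid.toList (1 : FreeMonoid ℕ+) = [] from rfl, circW]
  simp

lemma xiOf_succ (k : ℕ) : xiOf (k + 1) = xiX (Nat.succPNat k) := dif_pos _

lemma xiOf_one : xiOf 1 = xiX 1 := dif_pos _

lemma circ_xiOf (k : ℕ) (u : DXi) : circ 1 (xiOf (k + 1) * u) = xiOf (k + 2) * u := by
  rw [xiOf_succ, xiOf_succ, circ_mul_xi]
  congr 2
  apply PNat.coe_injective
  simp [PNat.add_coe]
  omega

lemma Dm_succ (m : ℕ) :
    Dm (m + 1) = ∑ k ∈ Finset.range (m + 1), xiOf (k + 1) * Dm (m - k) := by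
  induction m with
  | zero =>
      rw [Dm_step, Dm_zero, circ_one, Finset.sum_range_one, xiOf_one, add_zero,
        Nat.sub_self, Dm_zero]
  | succ m ih =>
      have hcirc : circ 1 (Dm (m + 1)) = ∑ k ∈ Finset.range (m + 1), xiOf (k + 2) * Dm (m - k) := by
        rw [ih,
          show (circ 1 (∑ k ∈ Finset.range (m + 1), xiOf (k + 1) * Dm (m - k)))
            = ∑ k ∈ Finset.range (m + 1), circHom 1 (xiOf (k + 1) * Dm (m - k)) from
              map_sum (circHom 1) _ _]
        exact Finset.sum_congr rfl fun k _ => circ_xiOf k (Dm (m - k))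
      rw [Dm_step, hcirc]
      conv_rhs => rw [Finset.sum_range_succ']
      simp only [Nat.succ_sub_succ, Nat.sub_zero]
      have h11 : ∀ k : ℕ, k + 1 + 1 = k + 2 := fun k => rfl
      simp only [h11, Nat.zero_add, xiOf_one]
      rw [add_comm]

end Key
section RU

/-- triangular sum swap -/
lemma tri_comm {M : Type*} [AddCommMonoid M] (n : ℕ) (f : ℕ → ℕ → M) :
    ∑ l ∈ Finset.range (n + 1), ∑ k ∈ Finset.range (n - l), f l k
      = ∑ k ∈ Finset.range (n + 1), ∑ l ∈ Finset.range (n - k), f l k := by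
  rw [Finset.sum_sigma', Finset.sum_sigma']
  refine Finset.sum_nbij' (fun x => ⟨x.2, x.1⟩) (fun x => ⟨x.2, x.1⟩) ?_ ?_ (fun _ _ => rfl)
    (fun _ _ => rfl) (fun _ _ => rfl) <;>
  simp only [Finset.mem_range, Sigma.forall, Finset.mem_sigma] <;>
  intro a b h <;> omega

/-- `ξ_k` in `Dfree`, junk `0` at `k = 0`. -/
def xiLOf (k : ℕ) : Dfree := toD (xiOf k)

lemma xiLOf_succ (k : ℕ) : xiLOf (k + 1) = xiL (Nat.succPNat k) := by
  rw [xiLOf, xiOf_succ, toD_xiX]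

lemma xiLOf_one : xiLOf 1 = xiL 1 := by rw [xiLOf, xiOf_one, toD_xiX]

/-- `toD` as an additive hom. -/
def toDHom : DXi →+ Dfree :=
  { toFun := toD, map_zero' := MonoidAlgebra.mapDomain_zero _,
    map_add' := MonoidAlgebra.mapDomain_add _ }

/-- `R(m,l) = ρ(D_m, ξ₁^l)`. -/
def Rml (m l : ℕ) : Dfree := rho (Dm m) (xiL 1 ^ l)

lemma Rml_zero_left (l : ℕ) : Rml 0 l = xiL 1 ^ l := by rw [Rml, Dm_zero, rho_one_left]

lemma Rml_toD (j : ℕ) : Rml j 0 = toD (Dm j) := by rw [Rml, pow_zero, rho_one_right]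

lemma Rml_base (m : ℕ) :
    Rml (m + 1) 0 = ∑ k ∈ Finset.range (m + 1), xiLOf (k + 1) * Rml (m - k) 0 := by
  rw [Rml_toD, Dm_succ,
    show toD (∑ k ∈ Finset.range (m + 1), xiOf (k + 1) * Dm (m - k))
      = ∑ k ∈ Finset.range (m + 1), toDHom (xiOf (k + 1) * Dm (m - k)) from
        map_sum toDHom _ _]
  refine Finset.sum_congr rfl fun k _ => ?_
  show toD (xiOf (k + 1) * Dm (m - k)) = xiLOf (k + 1) * Rml (m - k) 0
  rw [toD_mul, Rml_toD, xiLOf]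

lemma pnat_succ (k : ℕ) : Nat.succPNat k + 1 = Nat.succPNat (k + 1) := by
  apply PNat.coe_injective
  rw [PNat.add_coe]
  simp

lemma Rml_rec (m l : ℕ) :
    Rml m (l + 1)
      = ∑ k ∈ Finset.range m, xiLOf (k + 1) * Rml (m - 1 - k) (l + 1)
        + (xiL 1 * Rml m l
        + ∑ k ∈ Finset.range m, xiLOf (k + 2) * Rml (m - 1 - k) l) := by
  cases m with
  | zero =>
      simp only [Finset.range_zero, Finset.sum_empty, zero_add, add_zero]
      rw [Rml_zero_left, Rml_zero_left, pow_succ']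
  | succ m =>
      rw [Rml, Dm_succ, pow_succ',
        show rho (∑ k ∈ Finset.range (m + 1), xiOf (k + 1) * Dm (m - k)) (xiL 1 * xiL 1 ^ l)
          = ∑ k ∈ Finset.range (m + 1), rhoL (xiL 1 * xiL 1 ^ l) (xiOf (k + 1) * Dm (m - k)) from
            map_sum (rhoL (xiL 1 * xiL 1 ^ l)) _ _]
      have step : ∀ k ∈ Finset.range (m + 1),
          rhoL (xiL 1 * xiL 1 ^ l) (xiOf (k + 1) * Dm (m - k))
            = xiLOf (k + 1) * Rml (m - k) (l + 1)
              + xiL 1 * rhoL (xiL 1 ^ l) (xiOf (k + 1) * Dm (m - k))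
              + xiLOf (k + 2) * Rml (m - k) l := by
        intro k _
        show rho (xiOf (k + 1) * Dm (m - k)) (xiL 1 * xiL 1 ^ l)
          = xiLOf (k + 1) * Rml (m - k) (l + 1)
            + xiL 1 * rho (xiOf (k + 1) * Dm (m - k)) (xiL 1 ^ l)
            + xiLOf (k + 2) * Rml (m - k) l
        rw [xiOf_succ, rho_xi_xi, pnat_succ]
        rw [show rho (Dm (m - k)) (xiL 1 * xiL 1 ^ l) = Rml (m - k) (l + 1) by
          rw [Rml, pow_succ']]
        rw [show rho (Dm (m - k)) (xiL 1 ^ l) = Rml (m - k) l from rfl]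
        rw [xiLOf_succ, xiLOf_succ]
      rw [Finset.sum_congr rfl step, Finset.sum_add_distrib, Finset.sum_add_distrib]
      have hmid : ∑ k ∈ Finset.range (m + 1), xiL 1 * rhoL (xiL 1 ^ l) (xiOf (k + 1) * Dm (m - k))
          = xiL 1 * Rml (m + 1) l := by
        rw [← Finset.mul_sum, ← map_sum (rhoL (xiL 1 ^ l)) _ _]
        rw [show ((∑ k ∈ Finset.range (m + 1), xiOf (k + 1) * Dm (m - k)) : DXi)
          = Dm (m + 1) from (Dm_succ m).symm]
        rfl
      rw [hmid]
      have hidx : ∀ k : ℕ, m + 1 - 1 - k = m - k := fun k => by omega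
      simp only [hidx]
      abel

/-- `U_s = Σ_{l=0}^{s} (-1)^l R(s-l, l)`. -/
def Us (s : ℕ) : Dfree := ∑ l ∈ Finset.range (s + 1), (-1 : ℤ) ^ l • Rml (s - l) l

lemma Us_zero : Us 0 = 1 := by
  rw [Us, Finset.sum_range_one, pow_zero, one_smul, Nat.sub_zero, Rml_zero_left, pow_zero]

lemma Us_key (s k : ℕ) :
    xiLOf (k + 1) * Us (s - k)
      = (∑ l ∈ Finset.range (s - k), (-1 : ℤ) ^ (l + 1) • (xiLOf (k + 1) * Rml (s - l - 1 - k) (l + 1)))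
        + xiLOf (k + 1) * Rml (s - k) 0 := by
  rw [Us, Finset.mul_sum, Finset.sum_range_succ']
  congr 1
  · refine Finset.sum_congr rfl fun l _ => ?_
    rw [show s - k - (l + 1) = s - l - 1 - k from by omega, mul_smul_comm]
  · rw [Nat.sub_zero, pow_zero, one_smul]

lemma Us_succ (s : ℕ) : Us (s + 1) = 0 := by
  have eA : Us (s + 1)
      = (∑ l ∈ Finset.range (s + 1), (-1 : ℤ) ^ (l + 1) • Rml (s - l) (l + 1)) + Rml (s + 1) 0 := by
    rw [Us, Finset.sum_range_succ']
    simp only [Nat.succ_sub_succ, pow_zero, one_smul, Nat.sub_zero]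
  have eB : ∀ l, (-1 : ℤ) ^ (l + 1) • Rml (s - l) (l + 1)
      = (∑ k ∈ Finset.range (s - l), (-1 : ℤ) ^ (l + 1) • (xiLOf (k + 1) * Rml (s - l - 1 - k) (l + 1)))
        + (xiL 1 * ((-1 : ℤ) ^ (l + 1) • Rml (s - l) l)
        + ∑ k ∈ Finset.range (s - l), (-1 : ℤ) ^ (l + 1) • (xiLOf (k + 2) * Rml (s - l - 1 - k) l)) := by
    intro l
    rw [Rml_rec, smul_add, smul_add, Finset.smul_sum, Finset.smul_sum, mul_smul_comm]
  rw [eA, Finset.sum_congr rfl (fun l _ => eB l), Finset.sum_add_distrib, Finset.sum_add_distrib,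
    Rml_base]
  have hS1 : (∑ l ∈ Finset.range (s + 1), ∑ k ∈ Finset.range (s - l),
        (-1 : ℤ) ^ (l + 1) • (xiLOf (k + 1) * Rml (s - l - 1 - k) (l + 1)))
        + ∑ k ∈ Finset.range (s + 1), xiLOf (k + 1) * Rml (s - k) 0
      = ∑ k ∈ Finset.range (s + 1), xiLOf (k + 1) * Us (s - k) := by
    rw [tri_comm, ← Finset.sum_add_distrib]
    exact Finset.sum_congr rfl fun k _ => (Us_key s k).symm
  have hS2 : ∑ l ∈ Finset.range (s + 1), xiL 1 * ((-1 : ℤ) ^ (l + 1) • Rml (s - l) l)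
      = -(xiL 1 * Us s) := by
    rw [Us, Finset.mul_sum, ← Finset.sum_neg_distrib]
    refine Finset.sum_congr rfl fun l _ => ?_
    rw [pow_succ, mul_neg_one, neg_smul, mul_neg]
  have hS3 : ∑ l ∈ Finset.range (s + 1), ∑ k ∈ Finset.range (s - l),
        (-1 : ℤ) ^ (l + 1) • (xiLOf (k + 2) * Rml (s - l - 1 - k) l)
      = -∑ k ∈ Finset.range s, xiLOf (k + 2) * Us (s - 1 - k) := by
    rw [tri_comm, Finset.sum_range_succ]
    simp only [Nat.sub_self, Finset.range_zero, Finset.sum_empty, add_zero]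
    rw [← Finset.sum_neg_distrib]
    refine Finset.sum_congr rfl fun k hk => ?_
    have hks : k < s := Finset.mem_range.mp hk
    have hr : s - 1 - k + 1 = s - k := by omega
    rw [Us, Finset.mul_sum, hr, ← Finset.sum_neg_distrib]
    refine Finset.sum_congr rfl fun l _ => ?_
    rw [mul_smul_comm, pow_succ, mul_neg_one, neg_smul,
      show s - 1 - k - l = s - l - 1 - k from by omega]
  calc (∑ l ∈ Finset.range (s + 1), ∑ k ∈ Finset.range (s - l),
        (-1 : ℤ) ^ (l + 1) • (xiLOf (k + 1) * Rml (s - l - 1 - k) (l + 1)))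
      + ((∑ l ∈ Finset.range (s + 1), xiL 1 * ((-1 : ℤ) ^ (l + 1) • Rml (s - l) l))
      + ∑ l ∈ Finset.range (s + 1), ∑ k ∈ Finset.range (s - l),
        (-1 : ℤ) ^ (l + 1) • (xiLOf (k + 2) * Rml (s - l - 1 - k) l))
      + ∑ k ∈ Finset.range (s + 1), xiLOf (k + 1) * Rml (s - k) 0
      = (∑ k ∈ Finset.range (s + 1), xiLOf (k + 1) * Us (s - k))
        + (-(xiL 1 * Us s) + -∑ k ∈ Finset.range s, xiLOf (k + 2) * Us (s - 1 - k)) := by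
        rw [← hS1, hS2, hS3]; abel
    _ = 0 := by
        rw [Finset.sum_range_succ', Nat.sub_zero, xiLOf_one]
        have e : ∀ k ∈ Finset.range s, xiLOf (k + 1 + 1) * Us (s - (k + 1))
            = xiLOf (k + 2) * Us (s - 1 - k) := by
          intro k _
          have h1 : k + 1 + 1 = k + 2 := by omega
          have h2 : s - (k + 1) = s - 1 - k := by omega
          rw [h1, h2]
        rw [Finset.sum_congr rfl e]
        abel

end RU
section Phi

lemma tri_comm' {M : Type*} [AddCommMonoid M] (n : ℕ) (f : ℕ → ℕ → M) :
    ∑ l ∈ Finset.range (n + 1), ∑ k ∈ Finset.range (n - l + 1), f l k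
      = ∑ k ∈ Finset.range (n + 1), ∑ l ∈ Finset.range (n - k + 1), f l k := by
  rw [Finset.sum_sigma', Finset.sum_sigma']
  refine Finset.sum_nbij' (fun x => ⟨x.2, x.1⟩) (fun x => ⟨x.2, x.1⟩) ?_ ?_ (fun _ _ => rfl)
    (fun _ _ => rfl) (fun _ _ => rfl) <;>
  simp only [Finset.mem_range, Sigma.forall, Finset.mem_sigma] <;>
  intro a b h <;> omega

lemma mem_Ifin {r n : ℕ} (c : Fin r → ℕ) :
    c ∈ Ifin r n ↔ (∀ i, 1 ≤ c i) ∧ (∑ i, c i) = n := by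
  unfold Ifin
  rw [Finset.mem_filter, Fintype.mem_piFinset]
  constructor
  · rintro ⟨h1, h2⟩
    exact ⟨fun i => (Finset.mem_Icc.mp (h1 i)).1, h2⟩
  · rintro ⟨h1, h2⟩
    refine ⟨fun i => Finset.mem_Icc.mpr ⟨h1 i, ?_⟩, h2⟩
    calc c i ≤ ∑ j, c j := Finset.single_le_sum (fun j _ => Nat.zero_le _) (Finset.mem_univ i)
    _ = n := h2

lemma Ifin_zero_ne (n : ℕ) (hn : n ≠ 0) : Ifin 0 n = ∅ := by
  ext c
  rw [mem_Ifin]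
  simp only [Finset.notMem_empty, iff_false, not_and]
  intro _
  simp only [Finset.univ_eq_empty, Finset.sum_empty]
  omega

lemma Ifin_gt (r n : ℕ) (h : n < r) : Ifin r n = ∅ := by
  ext c
  rw [mem_Ifin]
  simp only [Finset.notMem_empty, iff_false, not_and]
  intro h1 h2
  have hle : r ≤ ∑ i, c i := by
    calc (r : ℕ) = ∑ _i : Fin r, 1 := by simp
    _ ≤ ∑ i, c i := Finset.sum_le_sum fun i _ => h1 i
  omega

lemma Ifin_zero_zero : Ifin 0 0 = {![]} := by
  ext c
  rw [mem_Ifin, Finset.mem_singleton]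
  constructor
  · intro _; exact Subsingleton.elim _ _
  · intro h; exact ⟨fun i => i.elim0, by simp⟩

lemma Ifin_succ_sum {M : Type*} [AddCommMonoid M] (r n : ℕ) (f : (Fin (r + 1) → ℕ) → M) :
    ∑ c ∈ Ifin (r + 1) n, f c
      = ∑ k ∈ Finset.Icc 1 n, ∑ c ∈ Ifin r (n - k), f (Fin.cons k c) := by
  rw [Finset.sum_sigma']
  refine Finset.sum_nbij' (fun c => (⟨c 0, Fin.tail c⟩ : Σ _k : ℕ, (Fin r → ℕ)))
    (fun p => Fin.cons p.1 p.2) ?_ ?_ ?_ ?_ ?_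
  · intro c hc
    rw [mem_Ifin] at hc
    obtain ⟨h1, h2⟩ := hc
    have hc0 : c 0 ≤ n := by
      calc c 0 ≤ ∑ j, c j := Finset.single_le_sum (fun j _ => Nat.zero_le _) (Finset.mem_univ 0)
      _ = n := h2
    rw [Finset.mem_sigma, Finset.mem_Icc, mem_Ifin]
    have h3 : ∑ i, Fin.tail c i = n - c 0 := by
      have hs : ∑ i, c i = c 0 + ∑ i : Fin r, c i.succ := Fin.sum_univ_succ c
      have ht : ∑ i, Fin.tail c i = ∑ i : Fin r, c i.succ := rfl
      omega
    exact ⟨⟨h1 0, hc0⟩, ⟨fun i => h1 i.succ, h3⟩⟩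
  · intro p hp
    rw [Finset.mem_sigma, Finset.mem_Icc, mem_Ifin] at hp
    obtain ⟨⟨hp1, hp2⟩, hq1, hq2⟩ := hp
    rw [mem_Ifin]
    constructor
    · intro i
      refine Fin.cases ?_ ?_ i
      · rwa [Fin.cons_zero]
      · intro j; rw [Fin.cons_succ]; exact hq1 j
    · rw [Fin.sum_cons, hq2]
      omega
  · intro c _
    dsimp only
    exact Fin.cons_self_tail c
  · intro p _
    ext
    · rw [Fin.cons_zero]
    · simp [Fin.tail_cons]
  · intro c _
    dsimp only
    rw [Fin.cons_self_tail]

/-- The composition `φ_{c_1} ∘ ⋯ ∘ φ_{c_r}`. -/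
def FcW {r : ℕ} (c : Fin r → ℕ) : DOne → DOne := (List.ofFn fun j => phi (c j)).foldr (· ∘ ·) id

lemma PhiM_succ_def (l : ℕ) (x : DOne) :
    PhiM (l + 1) x
      = ∑ r ∈ Finset.Icc 1 (l + 1), (-1 : ℤ) ^ r • ∑ c ∈ Ifin r (l + 1), FcW c x := rfl

lemma FcW_succ {r : ℕ} (c : Fin (r + 1) → ℕ) (x : DOne) :
    FcW c x = phi (c 0) (FcW (Fin.tail c) x) := by
  rw [FcW, List.ofFn_succ, List.foldr_cons]
  rfl

lemma FcW_zero (c : Fin 0 → ℕ) (x : DOne) : FcW c x = x := rfl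

/-- `φ_s` as an additive hom. -/
def phiHom (s : ℕ) : DOne →+ DOne :=
  { toFun := phi s, map_zero' := by simp [phi, Finsupp.sum_zero_index],
    map_add' := lsum_add _ }

lemma phi_single (s : ℕ) (w : FreeMonoid Bool) (a : ℤ) :
    phi s (MonoidAlgebra.single w a) = a • phiW s (FreeMonoid.toList w) :=
  lsum_single _ w a

lemma xiO_pow (k : ℕ) :
    xiO ^ k = MonoidAlgebra.single (FreeMonoid.ofList (List.replicate k true)) 1 := by
  induction k with
  | zero => rw [pow_zero, MonoidAlgebra.one_def]; rfl
  | succ k ih =>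
      rw [pow_succ', ih, xiO, MonoidAlgebra.single_mul_single, one_mul]
      congr 1

lemma zO_pow (k : ℕ) :
    zO ^ k = MonoidAlgebra.single (FreeMonoid.ofList (List.replicate k false)) 1 := by
  induction k with
  | zero => rw [pow_zero, MonoidAlgebra.one_def]; rfl
  | succ k ih =>
      rw [pow_succ', ih, zO, MonoidAlgebra.single_mul_single, one_mul]
      congr 1

/-- `G s k = φ_s(ξ₁^k)` at the level of words. -/
def G (s k : ℕ) : DOne := phiW s (List.replicate k true)

lemma phi_xiO_pow (s k : ℕ) : phi s (xiO ^ k) = G s k := by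
  rw [xiO_pow, phi_single, one_smul]
  rfl

lemma G_zero (k : ℕ) : G 0 k = xiO ^ k := by
  induction k with
  | zero => rw [G, List.replicate, phiW, if_pos rfl, pow_zero]
  | succ k ih =>
      rw [G, List.replicate_succ, phiW, Finset.sum_range_one, Nat.sub_zero, pow_zero, mul_one,
        pow_succ']
      rw [G] at ih
      rw [ih]

lemma G_succ_zero (s : ℕ) : G (s + 1) 0 = xiO * zO ^ s := by
  rw [G, List.replicate, phiW, if_neg (Nat.succ_ne_zero s), zO_pow, xiO,
    MonoidAlgebra.single_mul_single, one_mul, Nat.succ_sub_one]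
  congr 1

lemma G_rec (s k : ℕ) :
    G s (k + 1) = ∑ i ∈ Finset.range (s + 1), xiO * zO ^ i * G (s - i) k := by
  rw [G, List.replicate_succ, phiW]
  rfl

/-- `W_t = Σ_{k=0}^{t} (-1)^k G(t-k, k)`. -/
def Wt (t : ℕ) : DOne := ∑ k ∈ Finset.range (t + 1), (-1 : ℤ) ^ k • G (t - k) k

lemma Wt_zero : Wt 0 = 1 := by
  rw [Wt, Finset.sum_range_one, pow_zero, one_smul, Nat.sub_zero, G_zero, pow_zero]

lemma Wt_succ (l : ℕ) (IH : ∀ m ≤ l, Wt m = if m = 0 then 1 else 0) : Wt (l + 1) = 0 := by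
  have eA : Wt (l + 1)
      = (∑ k ∈ Finset.range (l + 1), (-1 : ℤ) ^ (k + 1) • G (l - k) (k + 1)) + G (l + 1) 0 := by
    rw [Wt, Finset.sum_range_succ']
    simp only [Nat.succ_sub_succ, pow_zero, one_smul, Nat.sub_zero]
  have eB : ∀ k, (-1 : ℤ) ^ (k + 1) • G (l - k) (k + 1)
      = ∑ i ∈ Finset.range (l - k + 1), (-1 : ℤ) ^ (k + 1) • (xiO * zO ^ i * G (l - k - i) k) := by
    intro k
    rw [G_rec, Finset.smul_sum]
  rw [eA, Finset.sum_congr rfl (fun k _ => eB k), tri_comm']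
  have eC : ∀ i ∈ Finset.range (l + 1),
      (∑ k ∈ Finset.range (l - i + 1), (-1 : ℤ) ^ (k + 1) • (xiO * zO ^ i * G (l - k - i) k))
        = -(xiO * zO ^ i * Wt (l - i)) := by
    intro i _
    rw [Wt, Finset.mul_sum, ← Finset.sum_neg_distrib]
    refine Finset.sum_congr rfl fun k _ => ?_
    rw [mul_smul_comm, pow_succ, mul_neg_one, neg_smul,
      show l - i - k = l - k - i from by omega]
  rw [Finset.sum_congr rfl eC, G_succ_zero]
  have eD : ∑ i ∈ Finset.range (l + 1), -(xiO * zO ^ i * Wt (l - i)) = -(xiO * zO ^ l) := by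
    rw [Finset.sum_eq_single_of_mem l (Finset.self_mem_range_succ l)]
    · rw [Nat.sub_self, IH 0 (Nat.zero_le l), if_pos rfl, mul_one]
    · intro i _ hne
      have hlt : i < l + 1 := by
        exact Finset.mem_range.mp (by assumption)
      rw [IH (l - i) (Nat.sub_le l i), if_neg (by omega), mul_zero, neg_zero]
  rw [eD, neg_add_cancel]

lemma Wt_eq (t : ℕ) : Wt t = if t = 0 then 1 else 0 := by
  induction t using Nat.strong_induction_on with
  | _ t IH =>
      cases t with
      | zero => rw [Wt_zero, if_pos rfl]
      | succ l =>
          rw [Wt_succ l (fun m hm => IH m (by omega)), if_neg (Nat.succ_ne_zero l)]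

lemma sum_Icc_one {M : Type*} [AddCommMonoid M] (n : ℕ) (g : ℕ → M) :
    ∑ r ∈ Finset.Icc 1 n, g r = ∑ i ∈ Finset.range n, g (i + 1) := by
  induction n with
  | zero => simp
  | succ n ih =>
      rw [Finset.sum_Icc_succ_top (by omega : 1 ≤ n + 1), ih, Finset.sum_range_succ]

lemma phiHom_apply (s : ℕ) (x : DOne) : phiHom s x = phi s x := rfl

lemma PhiM_one (l : ℕ) : PhiM l 1 = (-1 : ℤ) ^ l • xiO ^ l := by
  induction l using Nat.strong_induction_on with
  | _ l IH =>
      cases l with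
      | zero => simp [PhiM]
      | succ l =>
          have hgen : ∀ m, m ≤ l →
              (∑ i ∈ Finset.range (l + 1), (-1 : ℤ) ^ (i + 1) • ∑ c ∈ Ifin i m, FcW c (1 : DOne))
                = -(PhiM m 1) := by
            intro m hm
            cases m with
            | zero =>
                have h0 : (∑ i ∈ Finset.range (l + 1),
                      (-1 : ℤ) ^ (i + 1) • ∑ c ∈ Ifin i 0, FcW c (1 : DOne))
                    = (-1 : ℤ) ^ (0 + 1) • ∑ c ∈ Ifin 0 0, FcW c (1 : DOne) :=
                  Finset.sum_eq_single_of_mem 0 (Finset.mem_range.mpr (Nat.succ_pos l))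
                    (fun i _ hne => by
                      rw [Ifin_gt i 0 (Nat.pos_of_ne_zero hne), Finset.sum_empty, smul_zero])
                rw [h0, Ifin_zero_zero, Finset.sum_singleton, FcW_zero, pow_one, neg_smul,
                  one_smul]
                rfl
            | succ m' =>
                rw [← Finset.sum_subset
                    (show Finset.Icc 1 (m' + 1) ⊆ Finset.range (l + 1) by
                      intro x hx
                      rw [Finset.mem_Icc] at hx
                      rw [Finset.mem_range]
                      omega)
                    (by
                      intro x _ hx
                      rw [Finset.mem_Icc] at hx
                      push_neg at hx
                      rcases Nat.eq_zero_or_pos x with h0 | hpos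
                      · subst h0
                        rw [Ifin_zero_ne (m' + 1) (Nat.succ_ne_zero m'), Finset.sum_empty,
                          smul_zero]
                      · rw [Ifin_gt x (m' + 1) (by omega), Finset.sum_empty, smul_zero])]
                rw [PhiM_succ_def, ← Finset.sum_neg_distrib]
                refine Finset.sum_congr rfl fun i _ => ?_
                rw [pow_succ, mul_neg_one, neg_smul]
          rw [PhiM_succ_def, sum_Icc_one]
          have e1 : ∀ i ∈ Finset.range (l + 1),
              (-1 : ℤ) ^ (i + 1) • ∑ c ∈ Ifin (i + 1) (l + 1), FcW c (1 : DOne)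
                = ∑ k ∈ Finset.Icc 1 (l + 1),
                    (-1 : ℤ) ^ (i + 1) • ∑ c ∈ Ifin i (l + 1 - k), phi k (FcW c (1 : DOne)) := by
            intro i _
            rw [Ifin_succ_sum, Finset.smul_sum]
            refine Finset.sum_congr rfl fun k _ => ?_
            congr 1
            refine Finset.sum_congr rfl fun c _ => ?_
            rw [FcW_succ, Fin.cons_zero, Fin.tail_cons]
          rw [Finset.sum_congr rfl e1, Finset.sum_comm]
          have e2 : ∀ k ∈ Finset.Icc 1 (l + 1),
              (∑ i ∈ Finset.range (l + 1),
                  (-1 : ℤ) ^ (i + 1) • ∑ c ∈ Ifin i (l + 1 - k), phi k (FcW c (1 : DOne)))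
                = -((-1 : ℤ) ^ (l + 1 - k) • G k (l + 1 - k)) := by
            intro k hk
            rw [Finset.mem_Icc] at hk
            have e3 : ∀ i ∈ Finset.range (l + 1),
                (-1 : ℤ) ^ (i + 1) • ∑ c ∈ Ifin i (l + 1 - k), phi k (FcW c (1 : DOne))
                  = phiHom k
                      ((-1 : ℤ) ^ (i + 1) • ∑ c ∈ Ifin i (l + 1 - k), FcW c (1 : DOne)) := by
              intro i _
              rw [map_zsmul, map_sum (phiHom k)]
              rfl
            rw [Finset.sum_congr rfl e3, ← map_sum (phiHom k), hgen (l + 1 - k) (by omega),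
              map_neg, IH (l + 1 - k) (by omega), map_zsmul, phiHom_apply, phi_xiO_pow]
          rw [Finset.sum_congr rfl e2, Finset.sum_neg_distrib, sum_Icc_one]
          simp only [Nat.succ_sub_succ]
          have hrefl : ∑ i ∈ Finset.range (l + 1), (-1 : ℤ) ^ (l - i) • G (i + 1) (l - i)
              = ∑ j ∈ Finset.range (l + 1), (-1 : ℤ) ^ j • G (l + 1 - j) j := by
            rw [← Finset.sum_range_reflect (fun j => (-1 : ℤ) ^ j • G (l + 1 - j) j) (l + 1)]
            refine Finset.sum_congr rfl fun i hi => ?_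
            have hi' : i < l + 1 := Finset.mem_range.mp hi
            have h1 : l + 1 - 1 - i = l - i := by omega
            have h2 : l + 1 - (l - i) = i + 1 := by omega
            rw [h1, h2]
          have hsum : ∑ j ∈ Finset.range (l + 1), (-1 : ℤ) ^ j • G (l + 1 - j) j
              = -((-1 : ℤ) ^ (l + 1) • xiO ^ (l + 1)) := by
            have h := Wt_eq (l + 1)
            rw [if_neg (Nat.succ_ne_zero l), Wt, Finset.sum_range_succ, Nat.sub_self, G_zero]
              at h
            exact eq_neg_of_add_eq_zero_left h
          rw [hrefl, hsum, neg_neg]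

end Phi
section Final

lemma xiL_pow (l : ℕ) :
    xiL 1 ^ l = MonoidAlgebra.single (FreeMonoid.ofList (List.replicate l (Sum.inr 1))) 1 := by
  induction l with
  | zero => rw [pow_zero, MonoidAlgebra.one_def]; rfl
  | succ l ih =>
      rw [pow_succ', ih, xiL, MonoidAlgebra.single_mul_single, one_mul]
      congr 1

/-- `toD1` as an additive hom. -/
def toD1Hom : DOne →+ Dfree :=
  { toFun := toD1, map_zero' := MonoidAlgebra.mapDomain_zero _,
    map_add' := MonoidAlgebra.mapDomain_add _ }

lemma toD1_xiO_pow (l : ℕ) : toD1 (xiO ^ l) = xiL 1 ^ l := by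
  rw [xiO_pow, xiL_pow, toD1, MonoidAlgebra.coeff_single, Finsupp.mapDomain_single,
    MonoidAlgebra.ofCoeff_single]
  congr 1
  apply FreeMonoid.toList.injective
  show List.map _ (List.replicate l true) = _
  rw [List.map_replicate]
  simp

lemma Zmap_eq_Us (s : ℕ) : Zmap s 1 = Us s := by
  rw [Zmap, Us]
  refine Finset.sum_congr rfl fun l _ => ?_
  rw [PhiM_one,
    show toD1 ((-1 : ℤ) ^ l • xiO ^ l) = (-1 : ℤ) ^ l • toD1 (xiO ^ l) from
      map_zsmul toD1Hom _ _,
    toD1_xiO_pow,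
    show rho (dmap (xiX 1 ^ (s - l))) ((-1 : ℤ) ^ l • xiL 1 ^ l)
        = (-1 : ℤ) ^ l • rho (dmap (xiX 1 ^ (s - l))) (xiL 1 ^ l) from
      map_zsmul (rhoR _) _ _]
  rfl

end Final

/-- For every integer `s ≥ 0`, `Z_s(1) = 1` if `s = 0` and `Z_s(1) = 0` if `s ≥ 1`. -/
theorem Z_one (s : ℕ) : Zmap s 1 = if s = 0 then 1 else 0 := by
  rw [Zmap_eq_Us]
  cases s with
  | zero => rw [Us_zero, if_pos rfl]
  | succ s => rw [Us_succ, if_neg (Nat.succ_ne_zero s)]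

end
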